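/- Let q be a prime power and let m, n, k, r, δ be positive integers. Let C ⊆ (F_{q^m})^n be a code (not necessarily linear) of cardinality (q^m)^k that has (r,δ) rank-locality. Then its minimum rank distance satisfies d_R(C) ≤ n − k + 1 − (⌈k/r⌉ − 1)(δ − 1). -/

import Mathlib

open Finset

/-- The rank over `Fq` of (the restriction to `S` of) a vector `c` with entries in the
extension field `F`: the `Fq`-dimension of the `Fq`-linear span of the coordinates of `c`
indexed by `S`. -/
noncomputable def rankOn (Fq : Type*) [Field Fq] {F : Type*} [Field F] [Algebra Fq F]
    {ι : Type*} (c : ι → F) (S : Set ι) : ℕ :=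
  Module.finrank Fq (Submodule.span Fq (c '' S))

/-- Restriction of a vector to a finset of coordinates. -/
def resTo {F : Type*} {n : ℕ} (T : Finset (Fin n)) (c : Fin n → F) : {x // x ∈ T} → F :=
  fun x => c x.1

lemma card_res_le_mul {F : Type*} [Fintype F] {n : ℕ} (C : Set (Fin n → F))
    {S T : Finset (Fin n)} (hST : S ⊆ T) :
    Nat.card (resTo T '' C) ≤ Nat.card (resTo S '' C) * (Fintype.card F) ^ (T.card - S.card) := by
  classical
  have hmap : ∀ y : (resTo T '' C), (fun x : {x // x ∈ S} => (y : {x // x ∈ T} → F) ⟨x.1, hST x.2⟩)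
      ∈ resTo S '' C := by
    rintro ⟨y, c, hc, rfl⟩
    exact ⟨c, hc, rfl⟩
  set f : (resTo T '' C) → (resTo S '' C) × ({x // x ∈ T \ S} → F) :=
    fun y => (⟨_, hmap y⟩, fun x => (y : {x // x ∈ T} → F) ⟨x.1, (Finset.mem_sdiff.mp x.2).1⟩)
    with hfdef
  have hf : Function.Injective f := by
    intro y y' h
    have h1 : (f y).1 = (f y').1 := by rw [h]
    have h2 : (f y).2 = (f y').2 := by rw [h]
    apply Subtype.ext
    funext x
    by_cases hxS : x.1 ∈ S
    · have := congrFun (congrArg Subtype.val h1) ⟨x.1, hxS⟩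
      simpa [hfdef] using this
    · have := congrFun h2 ⟨x.1, Finset.mem_sdiff.mpr ⟨x.2, hxS⟩⟩
      simpa [hfdef] using this
  calc Nat.card (resTo T '' C)
      ≤ Nat.card ((resTo S '' C) × ({x // x ∈ T \ S} → F)) :=
        Nat.card_le_card_of_injective f hf
    _ = Nat.card (resTo S '' C) * (Fintype.card F) ^ (T.card - S.card) := by
        have hfc : Nat.card ({x // x ∈ T \ S} → F) = (Fintype.card F) ^ (T.card - S.card) := by
          rw [Nat.card_fun, Nat.card_eq_fintype_card, Nat.card_eq_fintype_card,
            Fintype.card_coe, Finset.card_sdiff_of_subset hST]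
        rw [Nat.card_prod, hfc]

lemma card_res_le_of_det {F : Type*} [Fintype F] {n : ℕ} (C : Set (Fin n → F))
    {S T : Finset (Fin n)} (hST : S ⊆ T)
    (h : ∀ c ∈ C, ∀ c' ∈ C, (∀ x ∈ S, c x = c' x) → ∀ x ∈ T, c x = c' x) :
    Nat.card (resTo T '' C) ≤ Nat.card (resTo S '' C) := by
  classical
  have hmap : ∀ y : (resTo T '' C), (fun x : {x // x ∈ S} => (y : {x // x ∈ T} → F) ⟨x.1, hST x.2⟩)
      ∈ resTo S '' C := by
    rintro ⟨y, c, hc, rfl⟩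
    exact ⟨c, hc, rfl⟩
  set f : (resTo T '' C) → (resTo S '' C) := fun y => ⟨_, hmap y⟩ with hfdef
  have hf : Function.Injective f := by
    rintro ⟨y, c, hc, rfl⟩ ⟨y', c', hc', rfl⟩ hyy'
    have hSag : ∀ x ∈ S, c x = c' x := by
      intro x hx
      have := congrFun (congrArg Subtype.val hyy') ⟨x, hx⟩
      simpa [hfdef, resTo] using this
    have hTag := h c hc c' hc' hSag
    apply Subtype.ext
    funext x
    exact hTag x.1 x.2
  exact Nat.card_le_card_of_injective f hf

lemma rankOn_le_card (Fq : Type*) [Field Fq] {F : Type*} [Field F] [Algebra Fq F]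
    [FiniteDimensional Fq F] {ι : Type*} (v : ι → F) (S : Set ι) (E : Finset ι)
    (h : ∀ x ∈ S, v x ≠ 0 → x ∈ E) : rankOn Fq v S ≤ E.card := by
  classical
  have hsub : v '' S ⊆ insert (0 : F) ↑(E.image v) := by
    rintro _ ⟨x, hx, rfl⟩
    by_cases hv : v x = 0
    · exact hv ▸ Set.mem_insert _ _
    · exact Set.mem_insert_of_mem _ (by simpa using ⟨x, h x hx hv, rfl⟩)
  calc rankOn Fq v S
      ≤ Module.finrank Fq (Submodule.span Fq (insert (0 : F) ↑(E.image v))) :=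
        Submodule.finrank_mono (Submodule.span_mono hsub)
    _ = Module.finrank Fq (Submodule.span Fq (↑(E.image v) : Set F)) := by
        rw [Submodule.span_insert_zero]
    _ ≤ (E.image v).card := finrank_span_finset_le_card _
    _ ≤ E.card := Finset.card_image_le

lemma agree_on_group (Fq : Type*) [Field Fq] {F : Type*} [Field F] [Algebra Fq F]
    [FiniteDimensional Fq F] {n δ : ℕ} (Γ : Finset (Fin n)) (c c' : Fin n → F)
    (hΓ : (∃ x ∈ Γ, c x ≠ c' x) → δ ≤ rankOn Fq (fun x => c x - c' x) (Γ : Set (Fin n)))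
    (E : Finset (Fin n)) (hE : E.card < δ)
    (hagree : ∀ x ∈ Γ, x ∉ E → c x = c' x) : ∀ x ∈ Γ, c x = c' x := by
  by_contra hcon
  push_neg at hcon
  obtain ⟨x, hx, hne⟩ := hcon
  have h1 : δ ≤ rankOn Fq (fun x => c x - c' x) ↑Γ := hΓ ⟨x, hx, hne⟩
  have h2 : rankOn Fq (fun x => c x - c' x) ↑Γ ≤ E.card := by
    apply rankOn_le_card
    intro y hy hvy
    by_contra hyE
    exact hvy (sub_eq_zero.mpr (hagree y (by exact_mod_cast hy) hyE))
  omega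

/-- **Singleton-like bound for rank-locality.**
Let `q` be a prime power and `m n k r δ` positive integers.  If a code
`C ⊆ (F_{q^m})^n` of cardinality `(q^m)^k` has `(r,δ)` rank-locality, then its minimum rank
distance is at most `n - k + 1 - (⌈k/r⌉ - 1)(δ - 1)`; equivalently, some pair of distinct
codewords is at rank distance at most this bound. -/
theorem rank_locality_singleton_bound
    (q m n k r δ : ℕ) (hq : IsPrimePow q)
    (hm : 0 < m) (hn : 0 < n) (hk : 0 < k) (hr : 0 < r) (hδ : 0 < δ)
    (Fq F : Type*) [Field Fq] [Fintype Fq] [Field F] [Fintype F] [Algebra Fq F]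
    (hcardq : Fintype.card Fq = q) (hfrk : Module.finrank Fq F = m)
    (C : Set (Fin n → F)) (hC : Nat.card C = (q ^ m) ^ k)
    (hloc : ∀ i : Fin n, ∃ Γ : Finset (Fin n), i ∈ Γ ∧ Γ.card ≤ r + δ - 1 ∧
      ∀ c ∈ C, ∀ c' ∈ C, (∃ x ∈ Γ, c x ≠ c' x) →
        δ ≤ rankOn Fq (fun x => c x - c' x) (Γ : Set (Fin n))) :
    ∃ c ∈ C, ∃ c' ∈ C, c ≠ c' ∧
      (rankOn Fq (fun x => c x - c' x) Set.univ : ℤ)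
        ≤ (n : ℤ) - (k : ℤ) + 1 - ((⌈(k : ℚ) / (r : ℚ)⌉ : ℤ) - 1) * ((δ : ℤ) - 1) := by
  classical
  have hFD : FiniteDimensional Fq F := Module.Finite.of_finite
  obtain ⟨d, rfl⟩ : ∃ d, δ = d + 1 := ⟨δ - 1, by omega⟩
  obtain ⟨k1, rfl⟩ : ∃ k1, k = k1 + 1 := ⟨k - 1, by omega⟩
  set Q := q ^ m with hQdef
  have hcardF : Fintype.card F = Q := by
    rw [Module.card_eq_pow_finrank (K := Fq) (V := F), hcardq, hfrk]
  have hQ2 : 2 ≤ Q := le_trans hq.two_le (Nat.le_self_pow hm.ne' q)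
  -- the key greedy construction
  have key : ∀ N (T : Finset (Fin n)) (e s : ℕ), n - T.card ≤ N →
      Nat.card (resTo T '' C) ≤ Q ^ e → e ≤ k1 → e + s * d ≤ T.card → e ≤ s * r →
      ∃ (T' : Finset (Fin n)) (s' : ℕ),
        Nat.card (resTo T' '' C) ≤ Q ^ k1 ∧ k1 + s' * d ≤ T'.card ∧ T'.card ≤ n ∧
        k1 + 1 ≤ (s' + 1) * r := by
    have huniv : ∀ e, e ≤ k1 →
        Nat.card (resTo (Finset.univ : Finset (Fin n)) '' C) ≤ Q ^ e → False := by
      intro e he hcard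
      have hinj : Set.InjOn (resTo (Finset.univ : Finset (Fin n)) (F := F)) C := by
        intro c _ c' _ hcc
        funext x
        exact congrFun hcc ⟨x, Finset.mem_univ x⟩
      have hcc : Nat.card (resTo (Finset.univ : Finset (Fin n)) '' C) = Nat.card C :=
        Nat.card_image_of_injOn hinj
      rw [hcc, hC] at hcard
      have : Q ^ e < Q ^ (k1 + 1) := pow_lt_pow_right₀ (by omega) (by omega)
      omega
    intro N
    induction N with
    | zero =>
      intro T e s h0 h1 h2 h3 h4
      have hTn : T.card ≤ n := by simpa using Finset.card_le_univ T
      have hTu : T = Finset.univ := Finset.eq_univ_of_card T (by simp only [Fintype.card_fin]; omega)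
      exact absurd (hTu ▸ h1) (fun h => huniv e h2 h)
    | succ N ih =>
      intro T e s h0 h1 h2 h3 h4
      by_cases hTu : T = Finset.univ
      · exact absurd (hTu ▸ h1) (fun h => huniv e h2 h)
      obtain ⟨i, hiT⟩ : ∃ i, i ∉ T := by
        by_contra hcon; push_neg at hcon
        exact hTu (Finset.eq_univ_iff_forall.mpr hcon)
      obtain ⟨Γ, hiΓ, hΓcard, hΓloc⟩ := hloc i
      have hΓcard' : Γ.card ≤ r + d := by omega
      set A := Γ \ T with hAdef
      have hiA : i ∈ A := Finset.mem_sdiff.mpr ⟨hiΓ, hiT⟩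
      have hA1 : 1 ≤ A.card := Finset.card_pos.mpr ⟨i, hiA⟩
      have hAΓ : A.card ≤ Γ.card := Finset.card_le_card Finset.sdiff_subset
      have hTn : T.card ≤ n := by simpa using Finset.card_le_univ T
      have hTΓn : (T ∪ Γ).card ≤ n := by simpa using Finset.card_le_univ (T ∪ Γ)
      have hTA : (T ∪ Γ).card = T.card + A.card := by
        rw [← Finset.union_sdiff_self_eq_union, ← hAdef,
          Finset.card_union_of_disjoint Finset.disjoint_sdiff]
      rcases lt_or_ge A.card (d + 1) with hsmall | hbig
      · -- small step: add the whole group for free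
        have hsub : T ⊆ T ∪ Γ := Finset.subset_union_left
        have hdet : ∀ c ∈ C, ∀ c' ∈ C, (∀ x ∈ T, c x = c' x) → ∀ x ∈ T ∪ Γ, c x = c' x := by
          intro c hc c' hc' hag x hx
          rcases Finset.mem_union.mp hx with hx | hx
          · exact hag x hx
          · refine agree_on_group Fq Γ c c' (hΓloc c hc c' hc') A hsmall ?_ x hx
            intro y hyΓ hyA
            have hyT : y ∈ T := by
              by_contra hyT
              exact hyA (Finset.mem_sdiff.mpr ⟨hyΓ, hyT⟩)
            exact hag y hyT
        have h1' : Nat.card (resTo (T ∪ Γ) '' C) ≤ Q ^ e :=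
          le_trans (card_res_le_of_det C hsub hdet) h1
        exact ih (T ∪ Γ) e s (by omega) h1' h2
          (le_trans h3 (Finset.card_le_card hsub)) h4
      · -- big step
        have hb' : d ≤ A.card := by omega
        set b := A.card - d with hbdef
        have hab : A.card = b + d := by omega
        have hbr : b ≤ r := by omega
        obtain ⟨D, hDA, hDcard⟩ := Finset.exists_subset_card_eq hb'
        have hDT' : D ⊆ T ∪ Γ :=
          hDA.trans (Finset.sdiff_subset.trans Finset.subset_union_right)
        have hDTdisj : ∀ x ∈ D, x ∉ T := fun x hx => (Finset.mem_sdiff.mp (hDA hx)).2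
        have hTsub : T ⊆ (T ∪ Γ) \ D := by
          intro x hx
          exact Finset.mem_sdiff.mpr ⟨Finset.mem_union_left _ hx, fun hD => hDTdisj x hD hx⟩
        have hcardTD : ((T ∪ Γ) \ D).card = T.card + b := by
          rw [Finset.card_sdiff_of_subset hDT', hTA, hDcard]
          omega
        have hdet : ∀ c ∈ C, ∀ c' ∈ C, (∀ x ∈ (T ∪ Γ) \ D, c x = c' x) →
            ∀ x ∈ T ∪ Γ, c x = c' x := by
          intro c hc c' hc' hag x hx
          rcases Finset.mem_union.mp hx with hxT | hxΓ
          · exact hag x (hTsub hxT)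
          · refine agree_on_group Fq Γ c c' (hΓloc c hc c' hc') D (by omega) ?_ x hxΓ
            intro y hyΓ hyD
            exact hag y (Finset.mem_sdiff.mpr ⟨Finset.mem_union_right _ hyΓ, hyD⟩)
        have hstep : Nat.card (resTo (T ∪ Γ) '' C) ≤ Q ^ (e + b) := by
          calc Nat.card (resTo (T ∪ Γ) '' C)
              ≤ Nat.card (resTo ((T ∪ Γ) \ D) '' C) :=
                card_res_le_of_det C Finset.sdiff_subset hdet
            _ ≤ Nat.card (resTo T '' C) * (Fintype.card F) ^ (((T ∪ Γ) \ D).card - T.card) :=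
                card_res_le_mul C hTsub
            _ ≤ Q ^ e * Q ^ b := by
                rw [hcardF, hcardTD]
                have hbb : T.card + b - T.card = b := by omega
                rw [hbb]
                exact Nat.mul_le_mul_right _ h1
            _ = Q ^ (e + b) := (pow_add Q e b).symm
        rcases le_or_gt (k1 + 1) (e + b) with hfin | hcont
        · -- final step: pad with part of the group
          have hc0 : k1 - e ≤ A.card := by omega
          obtain ⟨B, hBA, hBcard⟩ := Finset.exists_subset_card_eq hc0
          have hBdisj : Disjoint T B := by
            rw [Finset.disjoint_right]
            intro x hx
            exact (Finset.mem_sdiff.mp (hBA hx)).2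
          have hT'card : (T ∪ B).card = T.card + (k1 - e) := by
            rw [Finset.card_union_of_disjoint hBdisj, hBcard]
          refine ⟨T ∪ B, s, ?_, ?_, by simpa using Finset.card_le_univ (T ∪ B), ?_⟩
          · calc Nat.card (resTo (T ∪ B) '' C)
                ≤ Nat.card (resTo T '' C) * (Fintype.card F) ^ ((T ∪ B).card - T.card) :=
                  card_res_le_mul C Finset.subset_union_left
              _ ≤ Q ^ e * Q ^ (k1 - e) := by
                  rw [hcardF, hT'card]
                  have hbb : T.card + (k1 - e) - T.card = k1 - e := by omega
                  rw [hbb]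
                  exact Nat.mul_le_mul_right _ h1
              _ = Q ^ (e + (k1 - e)) := (pow_add _ _ _).symm
              _ = Q ^ k1 := by rw [show e + (k1 - e) = k1 by omega]
          · rw [hT'card]
            have hr1 : k1 + s * d = (e + s * d) + (k1 - e) := by
              have : e + (k1 - e) = k1 := by omega
              calc k1 + s * d = (e + (k1 - e)) + s * d := by rw [this]
                _ = (e + s * d) + (k1 - e) := by ring
            rw [hr1]
            exact Nat.add_le_add_right h3 _
          · calc k1 + 1 ≤ e + b := hfin
              _ ≤ s * r + r := Nat.add_le_add h4 hbr
              _ = (s + 1) * r := by ring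
        · -- recurse with the enlarged set
          refine ih (T ∪ Γ) (e + b) (s + 1) (by omega) hstep (by omega) ?_ ?_
          · rw [hTA, hab]
            have hr1 : e + b + (s + 1) * d = (e + s * d) + (b + d) := by ring
            rw [hr1]
            exact Nat.add_le_add_right h3 _
          · calc e + b ≤ s * r + r := Nat.add_le_add h4 hbr
              _ = (s + 1) * r := by ring
  -- start the construction
  have hinit : Nat.card (resTo (∅ : Finset (Fin n)) '' C) ≤ Q ^ 0 := by
    have h1 := Nat.card_le_card_of_injective
      (Subtype.val : (resTo (∅ : Finset (Fin n)) '' C) → ({x // x ∈ (∅ : Finset (Fin n))} → F))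
      Subtype.val_injective
    have h2 : Nat.card ({x // x ∈ (∅ : Finset (Fin n))} → F) = 1 := by
      rw [Nat.card_fun]
      simp
    rw [h2] at h1
    simpa only [pow_zero] using h1
  obtain ⟨T', s', hT'card, hT'low, hT'n, hksr⟩ :=
    key n ∅ 0 0 (by simp) hinit (by omega) (by simp) (by omega)
  -- two distinct codewords agreeing on T'
  have hlt : Nat.card (resTo T' '' C) < Nat.card C := by
    rw [hC]
    have : Q ^ k1 < Q ^ (k1 + 1) := pow_lt_pow_right₀ (by omega) (by omega)
    omega
  have hpair : ∃ c ∈ C, ∃ c' ∈ C, c ≠ c' ∧ ∀ x ∈ T', c x = c' x := by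
    by_contra hcon
    push_neg at hcon
    have hinj : Set.InjOn (resTo T') C := by
      intro c hc c' hc' he
      by_contra hne
      obtain ⟨x, hxT, hxne⟩ := hcon c hc c' hc' hne
      exact hxne (congrFun he ⟨x, hxT⟩)
    have := Nat.card_image_of_injOn hinj
    omega
  obtain ⟨c, hc, c', hc', hne, hag⟩ := hpair
  refine ⟨c, hc, c', hc', hne, ?_⟩
  -- rank bound
  have hrk : rankOn Fq (fun x => c x - c' x) Set.univ ≤ (T'ᶜ).card := by
    apply rankOn_le_card
    intro x _ hv
    refine Finset.mem_compl.mpr fun hxT' => hv ?_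
    exact sub_eq_zero_of_eq (hag x hxT')
  have hcompl : (T'ᶜ).card = n - T'.card := by
    simp [Finset.card_compl]
  -- pass to integers
  set R := rankOn Fq (fun x => c x - c' x) Set.univ with hRdef
  have hRN : R + (k1 + s' * d) ≤ n := by
    have hRT : R + T'.card ≤ n := by omega
    exact le_trans (Nat.add_le_add_left hT'low R) hRT
  have hlin : (R : ℤ) + (k1 : ℤ) + (s' : ℤ) * (d : ℤ) ≤ (n : ℤ) := by
    have := hRN
    push_cast at this ⊢
    linarith
  set tI := (⌈((k1 + 1 : ℕ) : ℚ) / ((r : ℕ) : ℚ)⌉ : ℤ) with htIdef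
  have htI : tI ≤ (s' : ℤ) + 1 := by
    rw [htIdef, Int.ceil_le]
    rw [div_le_iff₀ (by positivity : (0 : ℚ) < (r : ℕ))]
    push_cast
    exact_mod_cast hksr
  have htI1 : (1 : ℤ) ≤ tI := by
    have hpos : (0 : ℚ) < ((k1 + 1 : ℕ) : ℚ) / ((r : ℕ) : ℚ) :=
      div_pos (by exact_mod_cast Nat.succ_pos k1) (by exact_mod_cast hr)
    have := Int.ceil_pos.mpr hpos
    rw [htIdef]
    omega
  have hkc : (((k1 + 1 : ℕ)) : ℤ) = (k1 : ℤ) + 1 := by push_cast; ring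
  have hdc : (((d + 1 : ℕ)) : ℤ) = (d : ℤ) + 1 := by push_cast; ring
  rw [hkc, hdc]
  have hd0 : (0 : ℤ) ≤ (d : ℤ) := by positivity
  have hmul : (tI - 1) * (d : ℤ) ≤ (s' : ℤ) * (d : ℤ) :=
    mul_le_mul_of_nonneg_right (by linarith) hd0
  have hdd : ((d : ℤ) + 1 - 1) = (d : ℤ) := by ring
  rw [hdd]
  linarith
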